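/- arXiv:1501.06389 — 2 statements merged into one kernel-verified Lean document; each statement's English description precedes it below -/
import Mathlib

section
/- Let {τ_n}_{n≥1} be the unique normalized Markov trace on the Iwahori–Hecke algebras {H_n}_{n≥1}. For any n ≥ 1, any k ∈ {1,…,n} and any x, y ∈ H_k (viewed inside H_{n+1} via the natural embeddings), one has τ_{n+1}(xT_ky) = τ_{n+1}(xT_k^{−1}y) = τ_n(xy). -/
noncomputable section

open scoped TensorProduct
open Finset CategoryTheory

namespace YH

/-! ### Ground rings:
`RR = ℂ[u^{±1}, v]`, `LL = ℂ[u^{±1}, v^{±1}]`, `GG = ℂ[u^{±1}, v^{±1}, γ^{±1}]`. -/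

abbrev RR : Type := AddMonoidAlgebra ℂ (ℤ × ℕ)
abbrev LL : Type := AddMonoidAlgebra ℂ (ℤ × ℤ)
abbrev GG : Type := AddMonoidAlgebra ℂ (ℤ × ℤ × ℤ)

def uR : RR := AddMonoidAlgebra.of' ℂ (ℤ × ℕ) (1, 0)
def uRi : RR := AddMonoidAlgebra.of' ℂ (ℤ × ℕ) (-1, 0)
def vR : RR := AddMonoidAlgebra.of' ℂ (ℤ × ℕ) (0, 1)

def uL : LL := AddMonoidAlgebra.of' ℂ (ℤ × ℤ) (1, 0)
def uLi : LL := AddMonoidAlgebra.of' ℂ (ℤ × ℤ) (-1, 0)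
def vL : LL := AddMonoidAlgebra.of' ℂ (ℤ × ℤ) (0, 1)
def vLi : LL := AddMonoidAlgebra.of' ℂ (ℤ × ℤ) (0, -1)

def uG : GG := AddMonoidAlgebra.of' ℂ (ℤ × ℤ × ℤ) (1, 0, 0)
def uGi : GG := AddMonoidAlgebra.of' ℂ (ℤ × ℤ × ℤ) (-1, 0, 0)
def vG : GG := AddMonoidAlgebra.of' ℂ (ℤ × ℤ × ℤ) (0, 1, 0)
def vGi : GG := AddMonoidAlgebra.of' ℂ (ℤ × ℤ × ℤ) (0, -1, 0)
def gG : GG := AddMonoidAlgebra.of' ℂ (ℤ × ℤ × ℤ) (0, 0, 1)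
def gGi : GG := AddMonoidAlgebra.of' ℂ (ℤ × ℤ × ℤ) (0, 0, -1)

/-- The canonical embedding `ℂ[u^{±1},v^{±1}] → ℂ[u^{±1},v^{±1},γ^{±1}]`. -/
def embLG : LL →+* GG :=
  AddMonoidAlgebra.mapDomainRingHom ℂ
    ((AddMonoidHom.id ℤ).prodMap (AddMonoidHom.inl ℤ ℤ))

/-! ### Symmetric group combinatorics -/

/-- The simple transposition `s_i = (i, i+1)` (0-based), or `1` if out of range. -/
def sw {n : ℕ} (i : ℕ) : Equiv.Perm (Fin n) :=
  if h : i + 1 < n then Equiv.swap ⟨i, Nat.lt_of_succ_lt h⟩ ⟨i + 1, h⟩ else 1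

/-- The Coxeter length of a permutation = its number of inversions. -/
def pLen {n : ℕ} (w : Equiv.Perm (Fin n)) : ℕ :=
  ((Finset.univ : Finset (Fin n × Fin n)).filter
    (fun p => p.1 < p.2 ∧ w p.2 < w p.1)).card

def isDescent {n : ℕ} (w : Equiv.Perm (Fin n)) (i : ℕ) : Bool :=
  if h : i + 1 < n then decide (w ⟨i + 1, h⟩ < w ⟨i, Nat.lt_of_succ_lt h⟩) else false

def wordAux {n : ℕ} : ℕ → Equiv.Perm (Fin n) → List ℕ
  | 0, _ => []
  | fuel + 1, w =>
    match (List.range n).find? (fun i => isDescent w i) with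
    | none => []
    | some i => wordAux fuel (w * sw i) ++ [i]

/-- A canonical reduced word for a permutation. -/
def redWord {n : ℕ} (w : Equiv.Perm (Fin n)) : List ℕ := wordAux (n * n) w

/-- The natural extension of a permutation of `Fin n` to `Fin (n+1)` (fixing the last point). -/
def extPerm {n : ℕ} (w : Equiv.Perm (Fin n)) : Equiv.Perm (Fin (n + 1)) :=
  (Equiv.permCongr (finSuccEquivLast (n := n))).symm (Equiv.optionCongr w)

/-- The cycle `(p, p+1, …, n)` (0-based) in `S_{n+1}`, mapping `x ↦ x+1` for `p ≤ x < n`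
and `n ↦ p`. -/
def shiftCycle (n p : ℕ) : Equiv.Perm (Fin (n + 1)) :=
  ((List.range' p (n - p)).map (fun i => sw (n := n + 1) i)).prod

/-! ### The Iwahori–Hecke algebra of type A (presented over any commutative ring) -/

inductive HRel (A : Type) [CommRing A] (u v : A) (n : ℕ) :
    FreeAlgebra A ℕ → FreeAlgebra A ℕ → Prop
  | comm (i j : ℕ) (hij : i + 1 < j) (hj : j + 1 < n) :
      HRel A u v n (FreeAlgebra.ι A i * FreeAlgebra.ι A j)
        (FreeAlgebra.ι A j * FreeAlgebra.ι A i)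
  | braid (i : ℕ) (h : i + 2 < n) :
      HRel A u v n
        (FreeAlgebra.ι A i * FreeAlgebra.ι A (i + 1) * FreeAlgebra.ι A i)
        (FreeAlgebra.ι A (i + 1) * FreeAlgebra.ι A i * FreeAlgebra.ι A (i + 1))
  | quad (i : ℕ) (h : i + 1 < n) :
      HRel A u v n (FreeAlgebra.ι A i * FreeAlgebra.ι A i)
        (algebraMap A (FreeAlgebra A ℕ) (u ^ 2) +
          algebraMap A (FreeAlgebra A ℕ) v * FreeAlgebra.ι A i)
  | kill (i : ℕ) (h : ¬ i + 1 < n) : HRel A u v n (FreeAlgebra.ι A i) 0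

/-- The Iwahori–Hecke algebra `H_n` with generators `T_0, …, T_{n-2}` (0-based indexing
of the `n-1` generators `T_1, …, T_{n-1}` of the paper). -/
abbrev Hecke (A : Type) [CommRing A] (u v : A) (n : ℕ) : Type := RingQuot (HRel A u v n)

/-- The generator `T_i` of the Iwahori–Hecke algebra. -/
def HT (A : Type) [CommRing A] (u v : A) (n i : ℕ) : Hecke A u v n :=
  RingQuot.mkAlgHom A (HRel A u v n) (FreeAlgebra.ι A i)

/-- `T_w` for a permutation `w`, via a (canonical) reduced word. -/
def HTw (A : Type) [CommRing A] (u v : A) (n : ℕ) (w : Equiv.Perm (Fin n)) :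
    Hecke A u v n :=
  ((redWord w).map (fun i => HT A u v n i)).prod

/-- `T̃_w = u^{-ℓ(w)} T_w`; here `ui` is the inverse of `u`. -/
def HTt (A : Type) [CommRing A] (u v ui : A) (n : ℕ) (w : Equiv.Perm (Fin n)) :
    Hecke A u v n :=
  algebraMap A (Hecke A u v n) (ui ^ pLen w) * HTw A u v n w

/-- `f : H_m → H_n` is the block embedding at offset `off` if it sends `T_i` to `T_{off+i}`. -/
def IsBlockEmb (A : Type) [CommRing A] (u v : A) (m n off : ℕ)
    (f : Hecke A u v m →ₐ[A] Hecke A u v n) : Prop :=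
  ∀ i, i + 1 < m → f (HT A u v m i) = HT A u v n (off + i)

/-! ### Compositions -/

/-- The set of `d`-compositions of `n`. -/
def compD (d n : ℕ) : Finset (Fin d → ℕ) := Finset.Nat.antidiagonalTuple d n

/-- `μ_1 + ⋯ + μ_a` (sum of the parts with index `≤ a`). -/
def psumLe {d : ℕ} (μ : Fin d → ℕ) (a : Fin d) : ℕ :=
  ∑ b ∈ Finset.univ.filter (fun b : Fin d => b ≤ a), μ b

/-- `μ_1 + ⋯ + μ_{a-1}` (sum of the parts with index `< a`). -/
def psumLt {d : ℕ} (μ : Fin d → ℕ) (a : Fin d) : ℕ :=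
  ∑ b ∈ Finset.univ.filter (fun b : Fin d => b < a), μ b

/-- `μ^{[a]}` : add 1 to the `a`-th part. -/
def bump {d : ℕ} (μ : Fin d → ℕ) (a : Fin d) : Fin d → ℕ :=
  fun b => if b = a then μ b + 1 else μ b

/-- The base `[μ]` of a composition. -/
def base {d : ℕ} (μ : Fin d → ℕ) : Fin d → ℕ := fun a => if μ a = 0 then 0 else 1

/-- `Comp_d^0` : the set of nonzero `d`-compositions with all parts in `{0,1}`. -/
def comp0F (d : ℕ) : Finset (Fin d → ℕ) :=
  ((Finset.univ : Finset (Fin d → Bool)).image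
    (fun f a => if f a then 1 else 0)).filter (fun μ => μ ≠ fun _ => 0)

/-- The index set `I_μ` (0-based) of the generators of the Young subgroup/parabolic. -/
def Imu {d : ℕ} (μ : Fin d → ℕ) (n : ℕ) : Set ℕ :=
  {i | i + 1 < n ∧ ∀ a : Fin d, i + 1 ≠ psumLe μ a}

/-- The parabolic subalgebra `H^μ ⊆ H_n`. -/
def heckeSub (A : Type) [CommRing A] (u v : A) {d : ℕ} (μ : Fin d → ℕ) (n : ℕ) :
    Subalgebra A (Hecke A u v n) :=
  Algebra.adjoin A {x | ∃ i ∈ Imu μ n, x = HT A u v n i}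

/-! ### The Yokonuma–Hecke algebra -/

abbrev YGen : Type := ℕ ⊕ ℕ

def Fg (A : Type) [CommRing A] (i : ℕ) : FreeAlgebra A YGen :=
  FreeAlgebra.ι A (Sum.inl i)

def Ft (A : Type) [CommRing A] (j : ℕ) : FreeAlgebra A YGen :=
  FreeAlgebra.ι A (Sum.inr j)

/-- The element `e_i = (1/d) ∑_{0 ≤ s ≤ d-1} t_i^s t_{i+1}^{-s}` of the free algebra
(`t^{-s} = t^{(d-s) mod d}` since `t^d = 1`). -/
def Fe (A : Type) [CommRing A] [Algebra ℂ A] (d i : ℕ) : FreeAlgebra A YGen :=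
  algebraMap A (FreeAlgebra A YGen) (algebraMap ℂ A (d : ℂ)⁻¹) *
    ∑ s ∈ Finset.range d, Ft A i ^ s * Ft A (i + 1) ^ ((d - s) % d)

/-- `s_i(j)` on indices. -/
def swapN (i j k : ℕ) : ℕ := if k = i then j else if k = j then i else k

inductive YRel (A : Type) [CommRing A] [Algebra ℂ A] (u v : A) (d n : ℕ) :
    FreeAlgebra A YGen → FreeAlgebra A YGen → Prop
  | gcomm (i j : ℕ) (hij : i + 1 < j) (hj : j + 1 < n) :
      YRel A u v d n (Fg A i * Fg A j) (Fg A j * Fg A i)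
  | gbraid (i : ℕ) (h : i + 2 < n) :
      YRel A u v d n (Fg A i * Fg A (i + 1) * Fg A i)
        (Fg A (i + 1) * Fg A i * Fg A (i + 1))
  | tcomm (i j : ℕ) (hi : i < n) (hj : j < n) :
      YRel A u v d n (Ft A i * Ft A j) (Ft A j * Ft A i)
  | gtrel (i j : ℕ) (hi : i + 1 < n) (hj : j < n) :
      YRel A u v d n (Fg A i * Ft A j) (Ft A (swapN i (i + 1) j) * Fg A i)
  | tord (j : ℕ) (hj : j < n) : YRel A u v d n (Ft A j ^ d) 1
  | quad (i : ℕ) (h : i + 1 < n) :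
      YRel A u v d n (Fg A i * Fg A i)
        (algebraMap A (FreeAlgebra A YGen) (u ^ 2) +
          algebraMap A (FreeAlgebra A YGen) v * (Fe A d i * Fg A i))
  | gkill (i : ℕ) (h : ¬ i + 1 < n) : YRel A u v d n (Fg A i) 0
  | tkill (j : ℕ) (h : ¬ j < n) : YRel A u v d n (Ft A j) 1

/-- The Yokonuma–Hecke algebra `Y_{d,n}`, with generators `g_0, …, g_{n-2}` and
`t_0, …, t_{n-1}` (0-based reindexing of the paper's generators). -/
abbrev Yok (A : Type) [CommRing A] [Algebra ℂ A] (u v : A) (d n : ℕ) : Type :=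
  RingQuot (YRel A u v d n)

def yg (A : Type) [CommRing A] [Algebra ℂ A] (u v : A) (d n i : ℕ) : Yok A u v d n :=
  RingQuot.mkAlgHom A (YRel A u v d n) (Fg A i)

def yt (A : Type) [CommRing A] [Algebra ℂ A] (u v : A) (d n j : ℕ) : Yok A u v d n :=
  RingQuot.mkAlgHom A (YRel A u v d n) (Ft A j)

def ye (A : Type) [CommRing A] [Algebra ℂ A] (u v : A) (d n i : ℕ) : Yok A u v d n :=
  RingQuot.mkAlgHom A (YRel A u v d n) (Fe A d i)

/-- `g_w` via a canonical reduced word. -/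
def ygw (A : Type) [CommRing A] [Algebra ℂ A] (u v : A) (d n : ℕ)
    (w : Equiv.Perm (Fin n)) : Yok A u v d n :=
  ((redWord w).map (fun i => yg A u v d n i)).prod

/-- `g̃_w = u^{-ℓ(w)} g_w`; here `ui` is the inverse of `u`. -/
def ygt (A : Type) [CommRing A] [Algebra ℂ A] (u v ui : A) (d n : ℕ)
    (w : Equiv.Perm (Fin n)) : Yok A u v d n :=
  algebraMap A (Yok A u v d n) (ui ^ pLen w) * ygw A u v d n w

/-! ### Characters of `(ℤ/dℤ)^n` and idempotents -/

/-- A character of `(ℤ/dℤ)^n`, recorded by the exponents `k_j` with `χ(t_j) = ξ^{k_j}`. -/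
abbrev Char (d n : ℕ) : Type := Fin n → ZMod d

/-- A primitive `d`-th root of unity. -/
def xi (d : ℕ) : ℂ := Complex.exp (2 * Real.pi * Complex.I / d)

/-- The action of `S_n` on characters : `w(χ)(t_j) = χ(t_{w^{-1}(j)})`. -/
def permAct {d n : ℕ} (w : Equiv.Perm (Fin n)) (χ : Char d n) : Char d n :=
  fun j => χ (w⁻¹ j)

/-- `Comp(χ)`, the composition of `n` counting how many `t_j` take each character value. -/
def compOf {d n : ℕ} [NeZero d] (χ : Char d n) : Fin d → ℕ :=
  fun a => (Finset.univ.filter (fun j : Fin n => χ j = ((a : ℕ) : ZMod d))).card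

/-- The block of position `j` in the composition `μ`. -/
def blockOf {d : ℕ} (μ : Fin d → ℕ) (j : ℕ) : ZMod d :=
  (((Finset.univ.filter (fun a : Fin d => psumLe μ a ≤ j)).card : ℕ) : ZMod d)

/-- The distinguished character `χ_1^μ` of the orbit attached to `μ`. -/
def chiOne {d : ℕ} (μ : Fin d → ℕ) (n : ℕ) : Char d n := fun j => blockOf μ (j : ℕ)

/-- Extension of a character of `(ℤ/d)^n` to `(ℤ/d)^{n+1}` with last value `ξ_a`. -/
def extChar {d n : ℕ} (χ : Char d n) (a : Fin d) : Char d (n + 1) :=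
  fun j => if h : (j : ℕ) < n then χ ⟨j, h⟩ else ((a : ℕ) : ZMod d)

/-- Membership in the Young subgroup `S^μ` = stabiliser of `χ_1^μ`. -/
def IsYoung {d : ℕ} (μ : Fin d → ℕ) (n : ℕ) (w : Equiv.Perm (Fin n)) : Prop :=
  permAct w (chiOne μ n) = chiOne μ n

/-- The distinguished (minimal length) coset representative `π_χ` with
`π_χ(χ_1^μ) = χ`. -/
def piRep {d n : ℕ} (μ : Fin d → ℕ) (χ : Char d n) : Equiv.Perm (Fin n) :=
  if h : (Finset.univ.filter
      (fun w : Equiv.Perm (Fin n) => permAct w (chiOne μ n) = χ)).Nonempty then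
    (Finset.exists_min_image _ pLen h).choose
  else 1

/-- The primitive idempotent `E_χ` of `Y_{d,n}`. -/
def Echar (A : Type) [CommRing A] [Algebra ℂ A] (u v : A) (d n : ℕ) (χ : Char d n) :
    Yok A u v d n :=
  (((List.finRange n).map (fun j =>
    algebraMap A (Yok A u v d n) (algebraMap ℂ A (d : ℂ)⁻¹) *
      ∑ s ∈ Finset.range d,
        algebraMap A (Yok A u v d n) (algebraMap ℂ A (xi d ^ ((χ j).val * s))) *
          yt A u v d n j ^ ((d - s) % d))).prod)

/-- The central idempotent `E_μ`. -/
def Emu (A : Type) [CommRing A] [Algebra ℂ A] (u v : A) (d n : ℕ) [NeZero d]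
    (μ : Fin d → ℕ) : Yok A u v d n :=
  ∑ χ ∈ Finset.univ.filter (fun χ : Char d n => compOf χ = μ), Echar A u v d n χ

/-- The orbit `O(μ)`, as an index type of the matrix algebra. -/
abbrev OType (d n : ℕ) [NeZero d] (μ : Fin d → ℕ) : Type :=
  {χ : Char d n // compOf χ = μ}

/-- The defining property of the map `Ψ_μ : Y_{d,n} → Mat(H^μ)` (extended by `0` outside
`E_μ Y_{d,n}`, and with matrices indexed by all characters, supported on the orbit of `μ`). -/
def IsPsi (A : Type) [CommRing A] [Algebra ℂ A] (u v ui : A) (d n : ℕ) [NeZero d]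
    (μ : Fin d → ℕ)
    (Ψ : Yok A u v d n →ₗ[A] Matrix (Char d n) (Char d n) (Hecke A u v n)) : Prop :=
  ∀ (χ : Char d n) (w : Equiv.Perm (Fin n)),
    Ψ (Echar A u v d n χ * ygt A u v ui d n w) =
      if compOf χ = μ then
        Matrix.single χ (permAct w⁻¹ χ)
          (HTt A u v ui n ((piRep μ χ)⁻¹ * w * piRep μ (permAct w⁻¹ χ)))
      else 0

/-! ### Markov traces -/

/-- Markov trace conditions (M1)-(M2) for a family of linear forms on the Iwahori–Hecke
algebras. Natural embeddings `H_n ⊆ H_{n+1}` are quantified through their values on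
generators. -/
def IsMarkovH (A : Type) [CommRing A] (u v : A)
    (τ : ∀ m, Hecke A u v m →ₗ[A] A) : Prop :=
  (∀ m, ∀ x y : Hecke A u v m, τ m (x * y) = τ m (y * x)) ∧
  (∀ n, ∀ f : Hecke A u v (n + 1) →ₐ[A] Hecke A u v (n + 2),
    (∀ i, i + 1 < n + 1 → f (HT A u v (n + 1) i) = HT A u v (n + 2) i) →
    ∀ x : Hecke A u v (n + 1),
      τ (n + 2) (f x * HT A u v (n + 2) n) = τ (n + 1) x ∧
      τ (n + 2) (f x * Ring.inverse (HT A u v (n + 2) n)) = τ (n + 1) x)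

/-- The unique normalised Markov trace, with the convention `τ_0 = id`. -/
def IsNormMarkovH (A : Type) [CommRing A] (u v : A)
    (τ : ∀ m, Hecke A u v m →ₗ[A] A) : Prop :=
  IsMarkovH A u v τ ∧ τ 1 1 = 1 ∧
    ∀ c : A, τ 0 (algebraMap A (Hecke A u v 0) c) = c

/-- The Markov condition (M2) for a family of linear forms on the Yokonuma–Hecke algebras. -/
def MarkovCondY (A : Type) [CommRing A] [Algebra ℂ A] (u v : A) (d : ℕ)
    (ρ : ∀ m, Yok A u v d m →ₗ[A] A) : Prop :=
  ∀ n, ∀ f : Yok A u v d (n + 1) →ₐ[A] Yok A u v d (n + 2),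
    ((∀ i, i + 1 < n + 1 → f (yg A u v d (n + 1) i) = yg A u v d (n + 2) i) ∧
     (∀ j, j < n + 1 → f (yt A u v d (n + 1) j) = yt A u v d (n + 2) j)) →
    ∀ x : Yok A u v d (n + 1),
      ρ (n + 2) (f x * yg A u v d (n + 2) n) = ρ (n + 1) x ∧
      ρ (n + 2) (f x * Ring.inverse (yg A u v d (n + 2) n)) = ρ (n + 1) x

/-- A Markov trace on the family of Yokonuma–Hecke algebras. -/
def IsMarkovY (A : Type) [CommRing A] [Algebra ℂ A] (u v : A) (d : ℕ)
    (ρ : ∀ m, Yok A u v d m →ₗ[A] A) : Prop :=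
  (∀ m, ∀ x y : Yok A u v d m, ρ m (x * y) = ρ m (y * x)) ∧ MarkovCondY A u v d ρ

/-- `θ` is the linear form `τ_{μ_1} ⊗ ⋯ ⊗ τ_{μ_d}` on `H^μ ⊆ H_n`. -/
def IsTensorTau (A : Type) [CommRing A] (u v : A)
    (τ : ∀ m, Hecke A u v m →ₗ[A] A) {d : ℕ} (μ : Fin d → ℕ) (n : ℕ)
    (θ : Hecke A u v n →ₗ[A] A) : Prop :=
  ∀ (x : ∀ a : Fin d, Hecke A u v (μ a))
    (f : ∀ a : Fin d, Hecke A u v (μ a) →ₐ[A] Hecke A u v n),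
    (∀ a, IsBlockEmb A u v (μ a) n (psumLt μ a) (f a)) →
    θ (((List.finRange d).map (fun a => f a (x a))).prod) =
      (((List.finRange d).map (fun a => τ (μ a) (x a))).prod)

/-! ### Framed and classical braid groups -/

def bs (i : ℕ) : FreeGroup (ℕ ⊕ ℕ) := FreeGroup.of (Sum.inl i)
def btf (j : ℕ) : FreeGroup (ℕ ⊕ ℕ) := FreeGroup.of (Sum.inr j)

inductive FBRel (d n : ℕ) : FreeGroup (ℕ ⊕ ℕ) → Prop
  | scomm (i j : ℕ) (hij : i + 1 < j) (hj : j + 1 < n) :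
      FBRel d n (bs i * bs j * (bs j * bs i)⁻¹)
  | sbraid (i : ℕ) (h : i + 2 < n) :
      FBRel d n (bs i * bs (i + 1) * bs i * (bs (i + 1) * bs i * bs (i + 1))⁻¹)
  | tcomm (i j : ℕ) (hi : i < n) (hj : j < n) :
      FBRel d n (btf i * btf j * (btf j * btf i)⁻¹)
  | strel (i j : ℕ) (hi : i + 1 < n) (hj : j < n) :
      FBRel d n (bs i * btf j * (btf (swapN i (i + 1) j) * bs i)⁻¹)
  | tord (j : ℕ) (hj : j < n) : FBRel d n (btf j ^ d)
  | skill (i : ℕ) (h : ¬ i + 1 < n) : FBRel d n (bs i)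
  | tkill (j : ℕ) (h : ¬ j < n) : FBRel d n (btf j)

/-- The `ℤ/dℤ`-framed braid group on `n` strands. -/
abbrev FB (d n : ℕ) : Type := PresentedGroup {w | FBRel d n w}

def fbs (d n : ℕ) (i : ℕ) : FB d n := PresentedGroup.of (Sum.inl i)
def fbt (d n : ℕ) (j : ℕ) : FB d n := PresentedGroup.of (Sum.inr j)

inductive CBRel (n : ℕ) : FreeGroup ℕ → Prop
  | comm (i j : ℕ) (hij : i + 1 < j) (hj : j + 1 < n) :
      CBRel n (FreeGroup.of i * FreeGroup.of j * (FreeGroup.of j * FreeGroup.of i)⁻¹)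
  | braid (i : ℕ) (h : i + 2 < n) :
      CBRel n (FreeGroup.of i * FreeGroup.of (i + 1) * FreeGroup.of i *
        (FreeGroup.of (i + 1) * FreeGroup.of i * FreeGroup.of (i + 1))⁻¹)
  | kill (i : ℕ) (h : ¬ i + 1 < n) : CBRel n (FreeGroup.of i)

/-- The classical braid group on `n` strands. -/
abbrev CB (n : ℕ) : Type := PresentedGroup {w | CBRel n w}

def cbs (n : ℕ) (i : ℕ) : CB n := PresentedGroup.of i

/-- The natural inclusion `FB(d,n) → FB(d,n+1)` (characterised on generators). -/
def InclFB (d n : ℕ) (J : FB d n →* FB d (n + 1)) : Prop :=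
  (∀ i, i + 1 < n → J (fbs d n i) = fbs d (n + 1) i) ∧
  (∀ j, j < n → J (fbt d n j) = fbt d (n + 1) j)

/-- Markov equivalence of framed braids (= isotopy of the closures, by the framed
Markov theorem): the equivalence generated by conjugation and stabilisation. -/
inductive MarkovEqF (d : ℕ) (J : ∀ n, FB d n →* FB d (n + 1)) :
    (Σ n, FB d n) → (Σ n, FB d n) → Prop
  | refl (x) : MarkovEqF d J x x
  | symm {x y} : MarkovEqF d J x y → MarkovEqF d J y x
  | trans {x y z} : MarkovEqF d J x y → MarkovEqF d J y z → MarkovEqF d J x z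
  | conj (n : ℕ) (α β : FB d n) : MarkovEqF d J ⟨n, α * β⟩ ⟨n, β * α⟩
  | stabPos (n : ℕ) (α : FB d (n + 1)) :
      MarkovEqF d J ⟨n + 2, J (n + 1) α * fbs d (n + 2) n⟩ ⟨n + 1, α⟩
  | stabNeg (n : ℕ) (α : FB d (n + 1)) :
      MarkovEqF d J ⟨n + 2, J (n + 1) α * (fbs d (n + 2) n)⁻¹⟩ ⟨n + 1, α⟩

/-- The defining property of the homomorphism `δ^γ : A[ℤ/dℤ ≀ B_n] → A Y_{d,n}`:
`σ_i ↦ (γ + (1-γ)e_i) g_i` and `t_j ↦ t_j`. -/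
def IsDeltaY (A : Type) [CommRing A] [Algebra ℂ A] (u v γ : A) (d n : ℕ)
    (h : MonoidAlgebra A (FB d n) →ₐ[A] Yok A u v d n) : Prop :=
  (∀ i, i + 1 < n →
    h (MonoidAlgebra.of A (FB d n) (fbs d n i)) =
      (algebraMap A (Yok A u v d n) γ +
        algebraMap A (Yok A u v d n) (1 - γ) * ye A u v d n i) * yg A u v d n i) ∧
  (∀ j, j < n → h (MonoidAlgebra.of A (FB d n) (fbt d n j)) = yt A u v d n j)

/-- `ch` is the base-change ring homomorphism `LL Y_{d,n} → GG Y_{d,n}` along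
`ℂ[u^{±1},v^{±1}] ⊆ ℂ[u^{±1},v^{±1},γ^{±1}]`. -/
def IsBaseChange (d n : ℕ) (ch : Yok LL uL vL d n →+* Yok GG uG vG d n) : Prop :=
  (∀ i, ch (yg LL uL vL d n i) = yg GG uG vG d n i) ∧
  (∀ j, ch (yt LL uL vL d n j) = yt GG uG vG d n j) ∧
  (∀ c : LL, ch (algebraMap LL (Yok LL uL vL d n) c) =
    algebraMap GG (Yok GG uG vG d n) (embLG c))

/-! ### Miscellaneous algebra notions -/

/-- Morita equivalence of two rings. -/
def MoritaEq (B C : Type) [Ring B] [Ring C] : Prop :=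
  Nonempty (ModuleCat.{0} B ≌ ModuleCat.{0} C)

/-- A `k`-algebra is split semisimple if it is isomorphic to a finite direct sum of
matrix algebras over `k`. -/
def IsSplitSS (k : Type) [Field k] (B : Type) [Ring B] [Algebra k B] : Prop :=
  ∃ (r : ℕ) (m : Fin r → ℕ),
    Nonempty (B ≃ₐ[k] ∀ i : Fin r, Matrix (Fin (m i)) (Fin (m i)) k)

/-- Primitive idempotent of a ring. -/
def IsPrimIdem (B : Type) [Ring B] (e : B) : Prop :=
  IsIdempotentElem e ∧ e ≠ 0 ∧
    ∀ f g : B, IsIdempotentElem f → IsIdempotentElem g → f * g = 0 → g * f = 0 →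
      e = f + g → f = 0 ∨ g = 0

/-! ### The Ariki–Koike algebra -/

inductive AKRel (A : Type) [CommRing A] (Q : ℕ → A) (d : ℕ) (x xinv : A) (n : ℕ) :
    FreeAlgebra A ℕ → FreeAlgebra A ℕ → Prop
  | braid (i : ℕ) (h1 : 1 ≤ i) (h : i + 1 < n) :
      AKRel A Q d x xinv n
        (FreeAlgebra.ι A i * FreeAlgebra.ι A (i + 1) * FreeAlgebra.ι A i)
        (FreeAlgebra.ι A (i + 1) * FreeAlgebra.ι A i * FreeAlgebra.ι A (i + 1))
  | braid0 (h : 1 < n) :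
      AKRel A Q d x xinv n
        (FreeAlgebra.ι A 0 * FreeAlgebra.ι A 1 * FreeAlgebra.ι A 0 * FreeAlgebra.ι A 1)
        (FreeAlgebra.ι A 1 * FreeAlgebra.ι A 0 * FreeAlgebra.ι A 1 * FreeAlgebra.ι A 0)
  | comm (i j : ℕ) (hij : i + 1 < j) (hj : j < n) :
      AKRel A Q d x xinv n (FreeAlgebra.ι A i * FreeAlgebra.ι A j)
        (FreeAlgebra.ι A j * FreeAlgebra.ι A i)
  | quad (i : ℕ) (h1 : 1 ≤ i) (h : i < n) :
      AKRel A Q d x xinv n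
        ((FreeAlgebra.ι A i - algebraMap A (FreeAlgebra A ℕ) x) *
          (FreeAlgebra.ι A i + algebraMap A (FreeAlgebra A ℕ) xinv)) 0
  | cyc (h : 0 < n) :
      AKRel A Q d x xinv n
        (((List.range d).map
          (fun b => FreeAlgebra.ι A 0 - algebraMap A (FreeAlgebra A ℕ) (Q b))).prod) 0
  | kill (i : ℕ) (h : ¬ i < n) : AKRel A Q d x xinv n (FreeAlgebra.ι A i) 0

/-- The Ariki–Koike algebra `H_n^{Q,x}`. -/
abbrev ArikiKoike (A : Type) [CommRing A] (Q : ℕ → A) (d : ℕ) (x xinv : A) (n : ℕ) :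
    Type := RingQuot (AKRel A Q d x xinv n)


/-! ### Auxiliary lemmas for Statement 10 -/

lemma HT_zero {n i : ℕ} (h : ¬ i + 1 < n) : HT LL uL vL n i = 0 := by
  have := RingQuot.mkAlgHom_rel LL (HRel.kill (A := LL) (u := uL) (v := vL) i h)
  simpa [HT] using this

lemma HT_comm {n i j : ℕ} (hij : i + 1 < j) (hj : j + 1 < n) :
    HT LL uL vL n i * HT LL uL vL n j = HT LL uL vL n j * HT LL uL vL n i := by
  have := RingQuot.mkAlgHom_rel LL (HRel.comm (A := LL) (u := uL) (v := vL) i j hij hj)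
  simpa [HT, map_mul] using this

lemma HT_braid {n i : ℕ} (h : i + 2 < n) :
    HT LL uL vL n i * HT LL uL vL n (i + 1) * HT LL uL vL n i =
      HT LL uL vL n (i + 1) * HT LL uL vL n i * HT LL uL vL n (i + 1) := by
  have := RingQuot.mkAlgHom_rel LL (HRel.braid (A := LL) (u := uL) (v := vL) i h)
  simpa [HT, map_mul] using this

lemma HT_quad {n i : ℕ} (h : i + 1 < n) :
    HT LL uL vL n i * HT LL uL vL n i =
      algebraMap LL (Hecke LL uL vL n) (uL ^ 2) +
        algebraMap LL (Hecke LL uL vL n) vL * HT LL uL vL n i := by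
  have := RingQuot.mkAlgHom_rel LL (HRel.quad (A := LL) (u := uL) (v := vL) i h)
  simpa [HT, map_mul, map_add, AlgHom.commutes] using this

lemma hecke_ext {n : ℕ} {B : Type} [Semiring B] [Algebra LL B]
    (f g : Hecke LL uL vL n →ₐ[LL] B)
    (h : ∀ i, f (HT LL uL vL n i) = g (HT LL uL vL n i)) : f = g := by
  apply RingQuot.ringQuot_ext'
  apply FreeAlgebra.hom_ext
  funext i
  simpa [HT] using h i

/-- The natural embedding `H_m → H_n` for `m ≤ n`. -/
def embH (m n : ℕ) (h : m ≤ n) : Hecke LL uL vL m →ₐ[LL] Hecke LL uL vL n :=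
  RingQuot.liftAlgHom LL ⟨FreeAlgebra.lift LL
      (fun i => if i + 1 < m then HT LL uL vL n i else 0), by
    intro x y r
    induction r with
    | comm i j hij hj =>
        simp only [map_mul, FreeAlgebra.lift_ι_apply]
        rw [if_pos (show i + 1 < m by omega), if_pos (show j + 1 < m by omega)]
        exact HT_comm hij (by omega)
    | braid i hbr =>
        simp only [map_mul, FreeAlgebra.lift_ι_apply]
        rw [if_pos (show i + 1 < m by omega), if_pos (show i + 1 + 1 < m by omega)]
        exact HT_braid (by omega)
    | quad i hq =>
        simp only [map_mul, map_add, FreeAlgebra.lift_ι_apply, AlgHom.commutes]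
        rw [if_pos (show i + 1 < m by omega)]
        exact HT_quad (by omega)
    | kill i hk =>
        simp only [FreeAlgebra.lift_ι_apply, map_zero]
        rw [if_neg hk]⟩

lemma embH_HT (m n : ℕ) (h : m ≤ n) (i : ℕ) :
    embH m n h (HT LL uL vL m i) = if i + 1 < m then HT LL uL vL n i else 0 := by
  simp [embH, HT, RingQuot.liftAlgHom_mkAlgHom_apply, FreeAlgebra.lift_ι_apply]

lemma uL_mul_uLi : uL * uLi = 1 := by
  simp [uL, uLi, AddMonoidAlgebra.of'_apply, AddMonoidAlgebra.single_mul_single,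
    AddMonoidAlgebra.one_def]
  rfl

lemma vL_mul_vLi : vL * vLi = 1 := by
  simp [vL, vLi, AddMonoidAlgebra.of'_apply, AddMonoidAlgebra.single_mul_single,
    AddMonoidAlgebra.one_def]
  rfl

lemma uLi_sq_mul_uL_sq : uLi ^ 2 * uL ^ 2 = 1 := by
  rw [← mul_pow, mul_comm uLi uL, uL_mul_uLi, one_pow]

/-- Explicit inverse of the generator `T_i`. -/
def HTi (n i : ℕ) : Hecke LL uL vL n :=
  algebraMap LL (Hecke LL uL vL n) (uLi ^ 2) * HT LL uL vL n i -
    algebraMap LL (Hecke LL uL vL n) (uLi ^ 2 * vL)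

lemma HT_sub_smul_HTi {n i : ℕ} (h : i + 1 < n) :
    HT LL uL vL n i - uL ^ 2 • HTi n i = algebraMap LL (Hecke LL uL vL n) vL := by
  unfold HTi
  rw [Algebra.smul_def, mul_sub, ← mul_assoc, ← map_mul, ← map_mul]
  rw [show uL ^ 2 * uLi ^ 2 = 1 from by rw [mul_comm]; exact uLi_sq_mul_uL_sq]
  rw [map_one, one_mul]
  rw [show uL ^ 2 * (uLi ^ 2 * vL) = vL from by
    rw [← mul_assoc, mul_comm (uL ^ 2) (uLi ^ 2), uLi_sq_mul_uL_sq, one_mul]]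
  abel

lemma HTi_mul_HT {n i : ℕ} (h : i + 1 < n) : HTi n i * HT LL uL vL n i = 1 := by
  unfold HTi
  rw [sub_mul, mul_assoc, HT_quad h, mul_add, ← mul_assoc,
    ← map_mul, ← map_mul, uLi_sq_mul_uL_sq, map_one]
  abel

lemma HT_mul_HTi {n i : ℕ} (h : i + 1 < n) : HT LL uL vL n i * HTi n i = 1 := by
  have hc : HT LL uL vL n i * HTi n i = HTi n i * HT LL uL vL n i := by
    unfold HTi
    rw [mul_sub, sub_mul, ← mul_assoc, ← Algebra.commutes (uLi ^ 2) (HT LL uL vL n i),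
      ← Algebra.commutes (uLi ^ 2 * vL) (HT LL uL vL n i)]
  rw [hc]; exact HTi_mul_HT h

lemma ringInverse_HT {n i : ℕ} (h : i + 1 < n) :
    Ring.inverse (HT LL uL vL n i) = HTi n i :=
  Ring.inverse_unit ⟨HT LL uL vL n i, HTi n i, HT_mul_HTi h, HTi_mul_HT h⟩

lemma lemA (τ : ∀ m, Hecke LL uL vL m →ₗ[LL] LL) (hτ : IsNormMarkovH LL uL vL τ)
    (m : ℕ) (j : Hecke LL uL vL (m + 1) →ₐ[LL] Hecke LL uL vL (m + 2))
    (hj : ∀ i, i + 1 < m + 1 → j (HT LL uL vL (m + 1) i) = HT LL uL vL (m + 2) i)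
    (w : Hecke LL uL vL (m + 1)) :
    vL * τ (m + 2) (j w) = (1 - uL ^ 2) * τ (m + 1) w := by
  obtain ⟨h1, h2⟩ := hτ.1.2 m j hj w
  rw [ringInverse_HT (show m + 1 < m + 2 by omega)] at h2
  have key : vL • j w =
      j w * HT LL uL vL (m + 2) m - uL ^ 2 • (j w * HTi (m + 2) m) := by
    rw [← mul_smul_comm, ← mul_sub,
      HT_sub_smul_HTi (show m + 1 < m + 2 by omega), ← Algebra.commutes, Algebra.smul_def]
  have := congrArg (τ (m + 2)) key
  rw [map_smul, map_sub, map_smul, h1, h2] at this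
  rw [smul_eq_mul, smul_eq_mul] at this
  rw [this]; ring

lemma vL_cancel {a b : LL} (h : vL * a = vL * b) : a = b := by
  have := congrArg (fun t => vLi * t) h
  rwa [← mul_assoc, ← mul_assoc, mul_comm vLi vL, vL_mul_vLi, one_mul, one_mul] at this

lemma mainLem (τ : ∀ m, Hecke LL uL vL m →ₗ[LL] LL) (hτ : IsNormMarkovH LL uL vL τ)
    (k : ℕ) : ∀ n, k < n →
    ∀ (F : Hecke LL uL vL (k + 1) →ₐ[LL] Hecke LL uL vL (n + 1)),
    (∀ i, i + 1 < k + 1 → F (HT LL uL vL (k + 1) i) = HT LL uL vL (n + 1) i) →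
    ∀ (G : Hecke LL uL vL (k + 1) →ₐ[LL] Hecke LL uL vL n),
    (∀ i, i + 1 < k + 1 → G (HT LL uL vL (k + 1) i) = HT LL uL vL n i) →
    ∀ z : Hecke LL uL vL (k + 1),
      τ (n + 1) (F z * HT LL uL vL (n + 1) k) = τ n (G z) ∧
      τ (n + 1) (F z * HTi (n + 1) k) = τ n (G z) := by
  intro n
  induction n with
  | zero => exact fun h => absurd h (by omega)
  | succ m ih =>
    intro hk F hF G hG z
    rcases Nat.lt_succ_iff_lt_or_eq.mp hk with hkm | rfl
    · -- inductive step : k < m, so m = m' + 1 with m' ≥ k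
      obtain ⟨m', rfl⟩ : ∃ m', m = m' + 1 := ⟨m - 1, by omega⟩
      set G' := embH (k + 1) (m' + 2) (by omega) with hG'def
      set G'' := embH (k + 1) (m' + 1) (by omega) with hG''def
      set j := embH (m' + 2) (m' + 3) (by omega) with hjdef
      set j' := embH (m' + 1) (m' + 2) (by omega) with hj'def
      have hG'p : ∀ i, i + 1 < k + 1 → G' (HT LL uL vL (k + 1) i) = HT LL uL vL (m' + 2) i :=
        fun i hi => by rw [hG'def, embH_HT, if_pos (by omega)]
      have hG''p : ∀ i, i + 1 < k + 1 → G'' (HT LL uL vL (k + 1) i) = HT LL uL vL (m' + 1) i :=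
        fun i hi => by rw [hG''def, embH_HT, if_pos (by omega)]
      have hjp : ∀ i, i + 1 < m' + 2 → j (HT LL uL vL (m' + 2) i) = HT LL uL vL (m' + 3) i :=
        fun i hi => by rw [hjdef, embH_HT, if_pos hi]
      have hj'p : ∀ i, i + 1 < m' + 1 → j' (HT LL uL vL (m' + 1) i) = HT LL uL vL (m' + 2) i :=
        fun i hi => by rw [hj'def, embH_HT, if_pos hi]
      have hFj : F = j.comp G' := by
        apply hecke_ext
        intro i
        by_cases hi : i + 1 < k + 1
        · rw [hF i hi, AlgHom.comp_apply, hG'p i hi, hjp i (by omega)]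
        · rw [HT_zero hi, map_zero, map_zero]
      have hGj : G = j'.comp G'' := by
        apply hecke_ext
        intro i
        by_cases hi : i + 1 < k + 1
        · rw [hG i hi, AlgHom.comp_apply, hG''p i hi, hj'p i (by omega)]
        · rw [HT_zero hi, map_zero, map_zero]
      obtain ⟨ih1, ih2⟩ := ih hkm G' hG'p G'' hG''p z
      have jHTi : j (HTi (m' + 2) k) = HTi (m' + 3) k := by
        unfold HTi
        rw [map_sub, map_mul, AlgHom.commutes, AlgHom.commutes, hjp k (by omega)]
      have e1 : F z * HT LL uL vL (m' + 3) k = j (G' z * HT LL uL vL (m' + 2) k) := by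
        rw [map_mul, hjp k (by omega), hFj, AlgHom.comp_apply]
      have e2 : F z * HTi (m' + 3) k = j (G' z * HTi (m' + 2) k) := by
        rw [map_mul, jHTi, hFj, AlgHom.comp_apply]
      have eR : G z = j' (G'' z) := by rw [hGj, AlgHom.comp_apply]
      have R : vL * τ (m' + 2) (G z) = (1 - uL ^ 2) * τ (m' + 1) (G'' z) := by
        rw [eR, lemA τ hτ m' j' hj'p]
      constructor
      · apply vL_cancel
        rw [e1, lemA τ hτ (m' + 1) j hjp, ih1, R]
      · apply vL_cancel
        rw [e2, lemA τ hτ (m' + 1) j hjp, ih2, R]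
    · -- base case : n = k + 1
      have hGid : G = AlgHom.id LL (Hecke LL uL vL (k + 1)) := by
        apply hecke_ext
        intro i
        by_cases hi : i + 1 < k + 1
        · rw [hG i hi, AlgHom.id_apply]
        · rw [HT_zero hi, map_zero, map_zero]
      obtain ⟨h1, h2⟩ := hτ.1.2 k F hF z
      rw [ringInverse_HT (show k + 1 < k + 2 by omega)] at h2
      rw [hGid, AlgHom.id_apply]
      exact ⟨h1, h2⟩

/-- Lemma 5.1(i) of the paper: for the unique normalised Markov
trace on the Iwahori–Hecke algebras, `τ_{n+1}(x T_k y) = τ_{n+1}(x T_k^{-1} y) = τ_n(xy)`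
for `x, y ∈ H_k`. (0-based reindexing: the paper's `T_k`, `1 ≤ k ≤ n`, is `HT … k` with
`k < n` here, and `H_k` is `Hecke … (k+1)`.) -/
theorem statement10 (τ : ∀ m, Hecke LL uL vL m →ₗ[LL] LL)
    (hτ : IsNormMarkovH LL uL vL τ)
    (n k : ℕ) (hk : k < n)
    (f : Hecke LL uL vL (k + 1) →ₐ[LL] Hecke LL uL vL (n + 1))
    (hf : ∀ i, i + 1 < k + 1 → f (HT LL uL vL (k + 1) i) = HT LL uL vL (n + 1) i)
    (g : Hecke LL uL vL (k + 1) →ₐ[LL] Hecke LL uL vL n)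
    (hg : ∀ i, i + 1 < k + 1 → g (HT LL uL vL (k + 1) i) = HT LL uL vL n i)
    (x y : Hecke LL uL vL (k + 1)) :
    τ (n + 1) (f x * HT LL uL vL (n + 1) k * f y) = τ n (g (x * y)) ∧
    τ (n + 1) (f x * Ring.inverse (HT LL uL vL (n + 1) k) * f y) = τ n (g (x * y)) := by
  have hM1 := hτ.1.1
  obtain ⟨P1, P2⟩ := mainLem τ hτ k n hk f hf g hg (y * x)
  have hgxy : τ n (g (y * x)) = τ n (g (x * y)) := by
    rw [map_mul g, hM1 n (g y) (g x), ← map_mul]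
  constructor
  · rw [hM1 (n + 1) (f x * HT LL uL vL (n + 1) k) (f y), ← mul_assoc, ← map_mul, P1, hgxy]
  · rw [ringInverse_HT (show k + 1 < n + 1 by omega),
      hM1 (n + 1) (f x * HTi (n + 1) k) (f y), ← mul_assoc, ← map_mul, P2, hgxy]
end YH
end
end

section
/- Let γ be an indeterminate and R' = ℂ[u^{±1},v^{±1},γ^{±1}]. The assignment σ_i ↦ (γ + (1−γ)e_i)g_i for i = 1,…,n−1 and t_j ↦ t_j for j = 1,…,n extends to an algebra homomorphism δ^γ_{Y,n} : R'[ℤ/dℤ≀B_n] → R'Y_{d,n}; in particular each element (γ + (1−γ)e_i)g_i is invertible in R'Y_{d,n}, with inverse (γ^{−1} + (1−γ^{−1})e_i)g_i^{−1}. -/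
noncomputable section

open scoped TensorProduct
open Finset CategoryTheory

namespace YH

section S16Aux

namespace S16

variable {A : Type} [CommRing A] [Algebra ℂ A]

section General
variable (u v : A) (d n : ℕ)

lemma yt_out {j : ℕ} (h : ¬ j < n) : yt A u v d n j = 1 := by
  simpa [yt, Ft] using
    RingQuot.mkAlgHom_rel A (YRel.tkill (A := A) (u := u) (v := v) (d := d) (n := n) j h)

lemma yt_comm (j k : ℕ) :
    yt A u v d n j * yt A u v d n k = yt A u v d n k * yt A u v d n j := by
  by_cases hj : j < n
  · by_cases hk : k < n
    · simpa [yt, Ft, map_mul] using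
        RingQuot.mkAlgHom_rel A (YRel.tcomm (A := A) (u := u) (v := v) (d := d) (n := n) j k hj hk)
    · rw [yt_out u v d n hk]; rw [one_mul, mul_one]
  · rw [yt_out u v d n hj]; rw [one_mul, mul_one]

lemma yt_pow_d (j : ℕ) : yt A u v d n j ^ d = 1 := by
  by_cases hj : j < n
  · simpa [yt, Ft, map_pow] using
      RingQuot.mkAlgHom_rel A (YRel.tord (A := A) (u := u) (v := v) (d := d) (n := n) j hj)
  · rw [yt_out u v d n hj, one_pow]

lemma yg_yt {i : ℕ} (hi : i + 1 < n) (j : ℕ) :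
    yg A u v d n i * yt A u v d n j = yt A u v d n (swapN i (i+1) j) * yg A u v d n i := by
  by_cases hj : j < n
  · simpa [yg, yt, Fg, Ft, map_mul] using
      RingQuot.mkAlgHom_rel A (YRel.gtrel (A := A) (u := u) (v := v) (d := d) (n := n) i j hi hj)
  · have hs : swapN i (i+1) j = j := by unfold swapN; split_ifs <;> omega
    rw [hs, yt_out u v d n hj, one_mul, mul_one]

lemma yg_yt_pow {i : ℕ} (hi : i + 1 < n) (j s : ℕ) :
    yg A u v d n i * yt A u v d n j ^ s
      = yt A u v d n (swapN i (i+1) j) ^ s * yg A u v d n i := by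
  induction s with
  | zero => simp
  | succ m ih =>
      rw [pow_succ, ← mul_assoc, ih, mul_assoc, yg_yt u v d n hi j, ← mul_assoc, ← pow_succ]

/-- `e_{j,k} = (1/d) ∑ t_j^s t_k^{-s}` inside the Yokonuma–Hecke algebra. -/
def myE (j k : ℕ) : Yok A u v d n :=
  algebraMap A _ (algebraMap ℂ A (d : ℂ)⁻¹) *
    ∑ s ∈ Finset.range d, yt A u v d n j ^ s * yt A u v d n k ^ ((d - s) % d)

lemma ye_eq (i : ℕ) : ye A u v d n i = myE u v d n i (i+1) := by
  simp [ye, Fe, myE, yt, Ft, map_mul, map_sum, map_pow, AlgHom.commutes]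

lemma commute_yt_yt (j k : ℕ) : Commute (yt A u v d n j) (yt A u v d n k) :=
  yt_comm u v d n j k

lemma commute_yt_myE (l j k : ℕ) : Commute (yt A u v d n l) (myE u v d n j k) := by
  unfold myE
  refine Commute.mul_right ((Algebra.commutes _ _).symm) ?_
  refine Commute.sum_right _ _ _ fun s _ => ?_
  exact Commute.mul_right ((commute_yt_yt u v d n l j).pow_right s)
    ((commute_yt_yt u v d n l k).pow_right _)

lemma commute_myE_myE (j k l m : ℕ) :
    Commute (myE u v d n j k) (myE u v d n l m) := by
  conv_rhs => rw [myE]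
  refine Commute.mul_right ((Algebra.commutes _ _).symm) ?_
  refine Commute.sum_right _ _ _ fun s _ => ?_
  exact Commute.mul_right (((commute_yt_myE u v d n l j k).symm).pow_right s)
    (((commute_yt_myE u v d n m j k).symm).pow_right _)

lemma yg_myE {i : ℕ} (hi : i + 1 < n) (j k : ℕ) :
    yg A u v d n i * myE u v d n j k =
      myE u v d n (swapN i (i+1) j) (swapN i (i+1) k) * yg A u v d n i := by
  unfold myE
  rw [← mul_assoc, ← Algebra.commutes, mul_assoc, Finset.mul_sum, mul_assoc, Finset.sum_mul]
  congr 1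
  refine Finset.sum_congr rfl fun s _ => ?_
  rw [← mul_assoc, yg_yt_pow u v d n hi j s, mul_assoc, yg_yt_pow u v d n hi k _, ← mul_assoc]

lemma mod_invol {s : ℕ} (_hd : 0 < d) (hs : s < d) : (d - (d - s) % d) % d = s := by
  rcases Nat.eq_zero_or_pos s with rfl | hs0
  · simp [Nat.mod_self]
  · rw [Nat.mod_eq_of_lt (by omega : d - s < d), Nat.mod_eq_of_lt (by omega : d - (d - s) < d)]
    omega

lemma myE_symm [NeZero d] (j k : ℕ) : myE u v d n j k = myE u v d n k j := by
  have hd : 0 < d := Nat.pos_of_ne_zero (NeZero.ne d)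
  unfold myE
  congr 1
  refine Finset.sum_nbij' (fun s => (d - s) % d) (fun s => (d - s) % d) ?_ ?_ ?_ ?_ ?_
  · intro a ha; exact Finset.mem_range.mpr (Nat.mod_lt _ hd)
  · intro a ha; exact Finset.mem_range.mpr (Nat.mod_lt _ hd)
  · intro a ha; exact mod_invol d hd (Finset.mem_range.mp ha)
  · intro a ha; exact mod_invol d hd (Finset.mem_range.mp ha)
  · intro a ha
    rw [mod_invol d hd (Finset.mem_range.mp ha)]
    exact ((commute_yt_yt u v d n j k).pow_pow _ _).eq

lemma myE_sq [NeZero d] (j k : ℕ) :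
    myE u v d n j k * myE u v d n j k = myE u v d n j k := by
  have hd : 0 < d := Nat.pos_of_ne_zero (NeZero.ne d)
  set T := yt A u v d n j with hT
  set S := yt A u v d n k with hS
  have hcomm : Commute T S := yt_comm u v d n j k
  have hTd : T ^ d = 1 := yt_pow_d u v d n j
  have hSd : S ^ d = 1 := yt_pow_d u v d n k
  have hmodT : ∀ a : ℕ, T ^ a = T ^ (a % d) := by
    intro a
    conv_lhs => rw [← Nat.mod_add_div a d]
    rw [pow_add, pow_mul, hTd, one_pow, mul_one]
  have hmodS : ∀ a : ℕ, S ^ a = S ^ (a % d) := by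
    intro a
    conv_lhs => rw [← Nat.mod_add_div a d]
    rw [pow_add, pow_mul, hSd, one_pow, mul_one]
  set F : ZMod d → Yok A u v d n := fun m => T ^ m.val * S ^ (-m).val with hF
  have hFadd : ∀ a b : ZMod d, F a * F b = F (a + b) := by
    intro a b
    show T ^ a.val * S ^ (-a).val * (T ^ b.val * S ^ (-b).val)
        = T ^ (a + b).val * S ^ (-(a + b)).val
    rw [mul_assoc, ← mul_assoc (S ^ (-a).val), (hcomm.symm.pow_pow _ _).eq,
      mul_assoc, ← mul_assoc, ← pow_add, ← pow_add, hmodT, hmodS, ← ZMod.val_add,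
      ← ZMod.val_add, ← neg_add]
  have hsum : (∑ s ∈ Finset.range d, T ^ s * S ^ ((d - s) % d)) = ∑ m : ZMod d, F m := by
    refine Finset.sum_nbij' (fun s => ((s : ℕ) : ZMod d)) (fun m => m.val) ?_ ?_ ?_ ?_ ?_
    · intro a ha; exact Finset.mem_univ _
    · intro m hm; exact Finset.mem_range.mpr (ZMod.val_lt m)
    · intro a ha; exact ZMod.val_cast_of_lt (Finset.mem_range.mp ha)
    · intro m hm; exact ZMod.natCast_rightInverse m
    · intro s hs
      have hslt : s < d := Finset.mem_range.mp hs
      have h1 : ((s : ZMod d)).val = s := ZMod.val_cast_of_lt hslt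
      have h2 : (-(s : ZMod d)).val = (d - s) % d := by
        rcases Nat.eq_zero_or_pos s with rfl | hs0
        · simp [Nat.mod_self]
        · have hne : (s : ZMod d) ≠ 0 := by
            intro hcon
            rw [hcon] at h1
            simp at h1
            omega
          rw [ZMod.neg_val, if_neg hne, h1, Nat.mod_eq_of_lt (by omega)]
      rw [hF]
      simp only []
      rw [h1, h2]
  have hsq : (∑ m : ZMod d, F m) * (∑ m : ZMod d, F m)
      = (d : Yok A u v d n) * ∑ m : ZMod d, F m := by
    rw [Finset.sum_mul_sum]
    have hrow : ∀ a : ZMod d, (∑ b : ZMod d, F a * F b) = ∑ m : ZMod d, F m := by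
      intro a
      calc (∑ b : ZMod d, F a * F b) = ∑ b : ZMod d, F (a + b) := by
            refine Finset.sum_congr rfl fun b _ => hFadd a b
        _ = ∑ m : ZMod d, F m := Equiv.sum_comp (Equiv.addLeft a) F
    rw [Finset.sum_congr rfl fun a _ => hrow a, Finset.sum_const, Finset.card_univ,
      ZMod.card, nsmul_eq_mul]
  unfold myE
  rw [hsum]
  set c := algebraMap A (Yok A u v d n) (algebraMap ℂ A (d : ℂ)⁻¹) with hc
  set Z := ∑ m : ZMod d, F m with hZ
  have hcd : c * (d : Yok A u v d n) = 1 := by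
    rw [hc, show ((d : ℕ) : Yok A u v d n) = algebraMap A _ ((d : ℕ) : A) from
        (map_natCast (algebraMap A (Yok A u v d n)) d).symm, ← map_mul,
      show ((d : ℕ) : A) = algebraMap ℂ A ((d : ℕ) : ℂ) from
        (map_natCast (algebraMap ℂ A) d).symm, ← map_mul,
      inv_mul_cancel₀ (by exact_mod_cast NeZero.ne d), map_one, map_one]
  calc c * Z * (c * Z) = c * ((Z * c) * Z) := by rw [mul_assoc, mul_assoc]
    _ = c * (c * (Z * Z)) := by rw [← Algebra.commutes, mul_assoc]
    _ = c * (c * ((d : Yok A u v d n) * Z)) := by rw [hsq]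
    _ = c * ((c * (d : Yok A u v d n)) * Z) := by rw [mul_assoc]
    _ = c * Z := by rw [hcd, one_mul]

lemma yg_braid {i : ℕ} (h : i + 2 < n) :
    yg A u v d n i * yg A u v d n (i+1) * yg A u v d n i =
      yg A u v d n (i+1) * yg A u v d n i * yg A u v d n (i+1) := by
  simpa [yg, Fg, map_mul] using
    RingQuot.mkAlgHom_rel A (YRel.gbraid (A := A) (u := u) (v := v) (d := d) (n := n) i h)

lemma yg_comm {i j : ℕ} (hij : i + 1 < j) (hj : j + 1 < n) :
    yg A u v d n i * yg A u v d n j = yg A u v d n j * yg A u v d n i := by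
  simpa [yg, Fg, map_mul] using
    RingQuot.mkAlgHom_rel A (YRel.gcomm (A := A) (u := u) (v := v) (d := d) (n := n) i j hij hj)

lemma yg_sq {i : ℕ} (h : i + 1 < n) :
    yg A u v d n i * yg A u v d n i =
      algebraMap A _ (u ^ 2) + algebraMap A _ v * (ye A u v d n i * yg A u v d n i) := by
  simpa [yg, ye, Fg, map_mul, map_add, AlgHom.commutes] using
    RingQuot.mkAlgHom_rel A (YRel.quad (A := A) (u := u) (v := v) (d := d) (n := n) i h)

lemma swapN_self (i : ℕ) : swapN i (i+1) i = i + 1 := by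
  unfold swapN; simp

lemma swapN_succ (i : ℕ) : swapN i (i+1) (i+1) = i := by
  unfold swapN; split_ifs <;> omega

lemma ye_comm_yg [NeZero d] {i : ℕ} (hi : i + 1 < n) :
    yg A u v d n i * ye A u v d n i = ye A u v d n i * yg A u v d n i := by
  rw [ye_eq, yg_myE u v d n hi, swapN_self, swapN_succ, myE_symm]

end General

/-- Abstract computation: invertibility of `(γ + (1-γ)e)g`. -/
lemma inv_pair {R B : Type} [CommRing R] [Ring B] [Algebra R B]
    (γ γ' u2 w v : R) (e g : B) (he : e * e = e) (heg : g * e = e * g)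
    (hq : g * g = algebraMap R B u2 + algebraMap R B v * (e * g))
    (hγ : γ * γ' = 1) (hw : w * u2 = 1) :
    ((algebraMap R B γ + algebraMap R B (1 - γ) * e) * g) *
      ((algebraMap R B γ' + algebraMap R B (1 - γ') * e) *
        (algebraMap R B w * g - algebraMap R B (w * v) * e)) = 1 ∧
    ((algebraMap R B γ' + algebraMap R B (1 - γ') * e) *
        (algebraMap R B w * g - algebraMap R B (w * v) * e)) *
      ((algebraMap R B γ + algebraMap R B (1 - γ) * e) * g) = 1 := by
  have hlin : ∀ x y x' y' : R,
      (algebraMap R B x + algebraMap R B y * e) * (algebraMap R B x' + algebraMap R B y' * e)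
        = algebraMap R B (x * x') + algebraMap R B (x * y' + (y * x' + y * y')) * e := by
    intro x y x' y'
    rw [add_mul, mul_add, mul_add, ← map_mul, ← mul_assoc (algebraMap R B x), ← map_mul,
      mul_assoc (algebraMap R B y) e (algebraMap R B x'), ← Algebra.commutes x' e,
      ← mul_assoc, ← map_mul,
      mul_assoc (algebraMap R B y) e (algebraMap R B y' * e),
      ← mul_assoc e (algebraMap R B y') e, ← Algebra.commutes y' e,
      mul_assoc (algebraMap R B y') e e, he, ← mul_assoc, ← map_mul,
      map_add, map_add, add_mul, add_mul, add_assoc]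
  have hge : ∀ x y : R, g * (algebraMap R B x + algebraMap R B y * e)
      = (algebraMap R B x + algebraMap R B y * e) * g := by
    intro x y
    rw [mul_add, add_mul, ← Algebra.commutes x g, ← mul_assoc g, ← Algebra.commutes y g,
      mul_assoc, heg, ← mul_assoc, mul_assoc (algebraMap R B y) e g]
  have hAC : (algebraMap R B γ + algebraMap R B (1 - γ) * e) *
      (algebraMap R B γ' + algebraMap R B (1 - γ') * e) = 1 := by
    rw [hlin, hγ, show γ * (1 - γ') + ((1 - γ) * γ' + (1 - γ) * (1 - γ')) = 0 by
      linear_combination -hγ, map_one, map_zero, zero_mul, add_zero]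
  have hCA : (algebraMap R B γ' + algebraMap R B (1 - γ') * e) *
      (algebraMap R B γ + algebraMap R B (1 - γ) * e) = 1 := by
    rw [hlin, show γ' * γ = 1 by linear_combination hγ,
      show γ' * (1 - γ) + ((1 - γ') * γ + (1 - γ') * (1 - γ)) = 0 by
      linear_combination -hγ, map_one, map_zero, zero_mul, add_zero]
  have hgD : g * (algebraMap R B w * g - algebraMap R B (w * v) * e) = 1 := by
    rw [mul_sub, ← mul_assoc g, ← Algebra.commutes w g, mul_assoc (algebraMap R B w) g g, hq,
      ← mul_assoc g, ← Algebra.commutes (w * v) g, mul_assoc (algebraMap R B (w * v)) g e, heg,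
      mul_add, ← map_mul, hw, map_one, ← mul_assoc, ← map_mul, add_sub_cancel_right]
  have hDg : (algebraMap R B w * g - algebraMap R B (w * v) * e) * g = 1 := by
    rw [sub_mul, mul_assoc (algebraMap R B w) g g, hq, mul_assoc (algebraMap R B (w * v)) e g,
      mul_add, ← map_mul, hw, map_one, ← mul_assoc, ← map_mul, add_sub_cancel_right]
  have hee : ∀ x y : R, e * (algebraMap R B x + algebraMap R B y * e)
      = (algebraMap R B x + algebraMap R B y * e) * e := by
    intro x y
    rw [mul_add, add_mul, ← Algebra.commutes x e, ← mul_assoc e, ← Algebra.commutes y e]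
  have hDA : (algebraMap R B w * g - algebraMap R B (w * v) * e) *
        (algebraMap R B γ + algebraMap R B (1 - γ) * e)
      = (algebraMap R B γ + algebraMap R B (1 - γ) * e) *
        (algebraMap R B w * g - algebraMap R B (w * v) * e) := by
    rw [sub_mul, mul_sub, mul_assoc (algebraMap R B w) g, hge,
      ← mul_assoc (algebraMap R B w), Algebra.commutes w,
      mul_assoc _ (algebraMap R B w) g,
      mul_assoc (algebraMap R B (w * v)) e, hee,
      ← mul_assoc (algebraMap R B (w * v)), Algebra.commutes (w * v),
      mul_assoc _ (algebraMap R B (w * v)) e]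
  constructor
  · calc ((algebraMap R B γ + algebraMap R B (1 - γ) * e) * g) *
        ((algebraMap R B γ' + algebraMap R B (1 - γ') * e) *
          (algebraMap R B w * g - algebraMap R B (w * v) * e))
        = (algebraMap R B γ + algebraMap R B (1 - γ) * e) *
          ((g * (algebraMap R B γ' + algebraMap R B (1 - γ') * e)) *
            (algebraMap R B w * g - algebraMap R B (w * v) * e)) := by
          rw [mul_assoc, ← mul_assoc g]
      _ = (algebraMap R B γ + algebraMap R B (1 - γ) * e) *
          ((algebraMap R B γ' + algebraMap R B (1 - γ') * e) *
            (g * (algebraMap R B w * g - algebraMap R B (w * v) * e))) := by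
          rw [hge, mul_assoc]
      _ = 1 := by rw [hgD, mul_one, hAC]
  · calc ((algebraMap R B γ' + algebraMap R B (1 - γ') * e) *
          (algebraMap R B w * g - algebraMap R B (w * v) * e)) *
        ((algebraMap R B γ + algebraMap R B (1 - γ) * e) * g)
        = (algebraMap R B γ' + algebraMap R B (1 - γ') * e) *
          (((algebraMap R B w * g - algebraMap R B (w * v) * e) *
            (algebraMap R B γ + algebraMap R B (1 - γ) * e)) * g) := by
          rw [mul_assoc, ← mul_assoc _ _ g]
      _ = (algebraMap R B γ' + algebraMap R B (1 - γ') * e) *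
          ((algebraMap R B γ + algebraMap R B (1 - γ) * e) *
            ((algebraMap R B w * g - algebraMap R B (w * v) * e) * g)) := by
          rw [hDA, mul_assoc]
      _ = 1 := by rw [hDg, mul_one, hCA]


section GGPart

lemma gG_mul_gGi : gG * gGi = 1 := by
  rw [gG, gGi, AddMonoidAlgebra.of'_apply, AddMonoidAlgebra.of'_apply,
    AddMonoidAlgebra.single_mul_single, AddMonoidAlgebra.one_def]
  norm_num
  rfl

lemma uG_mul_uGi : uG * uGi = 1 := by
  rw [uG, uGi, AddMonoidAlgebra.of'_apply, AddMonoidAlgebra.of'_apply,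
    AddMonoidAlgebra.single_mul_single, AddMonoidAlgebra.one_def]
  norm_num
  rfl

lemma uGi_sq : uGi ^ 2 * uG ^ 2 = 1 := by
  have h : uG * uGi = 1 := uG_mul_uGi
  calc uGi ^ 2 * uG ^ 2 = (uG * uGi) ^ 2 := by ring
    _ = 1 := by rw [h, one_pow]

variable (d n : ℕ)

def AE (i : ℕ) : Yok GG uG vG d n :=
  algebraMap GG (Yok GG uG vG d n) gG +
    algebraMap GG (Yok GG uG vG d n) (1 - gG) * ye GG uG vG d n i

def CE (i : ℕ) : Yok GG uG vG d n :=
  algebraMap GG (Yok GG uG vG d n) gGi +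
    algebraMap GG (Yok GG uG vG d n) (1 - gGi) * ye GG uG vG d n i

def DE (i : ℕ) : Yok GG uG vG d n :=
  algebraMap GG (Yok GG uG vG d n) (uGi ^ 2) * yg GG uG vG d n i -
    algebraMap GG (Yok GG uG vG d n) (uGi ^ 2 * vG) * ye GG uG vG d n i

def PE (j k : ℕ) : Yok GG uG vG d n :=
  algebraMap GG (Yok GG uG vG d n) gG +
    algebraMap GG (Yok GG uG vG d n) (1 - gG) * myE uG vG d n j k

lemma AE_eq_PE (i : ℕ) : AE d n i = PE d n i (i+1) := by rw [AE, PE, ye_eq]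

lemma ye_sq [NeZero d] (i : ℕ) :
    ye GG uG vG d n i * ye GG uG vG d n i = ye GG uG vG d n i := by
  rw [ye_eq]; exact myE_sq uG vG d n i (i+1)

lemma main_inv [NeZero d] {i : ℕ} (hi : i + 1 < n) :
    (AE d n i * yg GG uG vG d n i) * (CE d n i * DE d n i) = 1 ∧
    (CE d n i * DE d n i) * (AE d n i * yg GG uG vG d n i) = 1 := by
  unfold AE CE DE
  exact inv_pair gG gGi (uG ^ 2) (uGi ^ 2) vG (ye GG uG vG d n i) (yg GG uG vG d n i)
    (ye_sq d n i) (ye_comm_yg uG vG d n hi) (yg_sq uG vG d n hi) gG_mul_gGi uGi_sq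

lemma commute_PE_PE (j k l m : ℕ) : Commute (PE d n j k) (PE d n l m) := by
  unfold PE
  exact Commute.add_right ((Algebra.commutes _ _).symm)
    (Commute.mul_right ((Algebra.commutes _ _).symm)
      (Commute.add_left (Algebra.commutes _ _)
        (Commute.mul_left (Algebra.commutes _ _) (commute_myE_myE uG vG d n j k l m))))

lemma commute_yt_PE (l j k : ℕ) : Commute (yt GG uG vG d n l) (PE d n j k) := by
  unfold PE
  exact Commute.add_right ((Algebra.commutes _ _).symm)
    (Commute.mul_right ((Algebra.commutes _ _).symm) (commute_yt_myE uG vG d n l j k))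

lemma yg_PE {i : ℕ} (hi : i + 1 < n) (j k : ℕ) :
    yg GG uG vG d n i * PE d n j k
      = PE d n (swapN i (i+1) j) (swapN i (i+1) k) * yg GG uG vG d n i := by
  unfold PE
  rw [mul_add, add_mul, ← Algebra.commutes gG, ← mul_assoc, ← Algebra.commutes (1 - gG),
    mul_assoc, yg_myE uG vG d n hi, ← mul_assoc]

lemma swapN_other {i k : ℕ} (h1 : k ≠ i) (h2 : k ≠ i + 1) : swapN i (i+1) k = k := by
  unfold swapN; split_ifs <;> omega

lemma tl {B : Type} [Semigroup B] {a b c e : B} (h : a * b = c * e) (x : B) :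
    a * (b * x) = c * (e * x) := by
  rw [← mul_assoc, h, mul_assoc]

lemma a_comm {i j : ℕ} (hij : i + 1 < j) (hj : j + 1 < n) :
    (AE d n i * yg GG uG vG d n i) * (AE d n j * yg GG uG vG d n j)
      = (AE d n j * yg GG uG vG d n j) * (AE d n i * yg GG uG vG d n i) := by
  have hi : i + 1 < n := by omega
  have hjn : j + 1 < n := hj
  have c1 : yg GG uG vG d n i * AE d n j = AE d n j * yg GG uG vG d n i := by
    rw [AE_eq_PE, yg_PE d n hi j (j+1), swapN_other (by omega) (by omega),
      swapN_other (by omega) (by omega)]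
  have c2 : yg GG uG vG d n j * AE d n i = AE d n i * yg GG uG vG d n j := by
    rw [AE_eq_PE, yg_PE d n hjn i (i+1), swapN_other (by omega) (by omega),
      swapN_other (by omega) (by omega)]
  have c3 : yg GG uG vG d n i * yg GG uG vG d n j
      = yg GG uG vG d n j * yg GG uG vG d n i := yg_comm uG vG d n hij hj
  have c4 : AE d n i * AE d n j = AE d n j * AE d n i := by
    rw [AE_eq_PE d n i, AE_eq_PE d n j]
    exact (commute_PE_PE d n i (i+1) j (j+1)).eq
  simp only [mul_assoc]
  simp only [tl c1, tl c2]
  rw [c3]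
  exact tl c4 _

lemma a_braid [NeZero d] {i : ℕ} (h : i + 2 < n) :
    (AE d n i * yg GG uG vG d n i) * (AE d n (i+1) * yg GG uG vG d n (i+1)) *
        (AE d n i * yg GG uG vG d n i)
      = (AE d n (i+1) * yg GG uG vG d n (i+1)) * (AE d n i * yg GG uG vG d n i) *
        (AE d n (i+1) * yg GG uG vG d n (i+1)) := by
  have hi : i + 1 < n := by omega
  have hi2 : i + 1 + 1 < n := by omega
  have hnum : i + 1 + 1 = i + 2 := rfl
  have m1 : yg GG uG vG d n i * AE d n (i+1) = PE d n i (i+2) * yg GG uG vG d n i := by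
    rw [AE_eq_PE, hnum, yg_PE d n hi (i+1) (i+2), swapN_succ,
      swapN_other (by omega) (by omega)]
  have m2 : yg GG uG vG d n (i+1) * AE d n i = PE d n i (i+2) * yg GG uG vG d n (i+1) := by
    have e1 : swapN (i+1) (i+1+1) i = i := by unfold swapN; split_ifs <;> omega
    have e2 : swapN (i+1) (i+1+1) (i+1) = i + 2 := by unfold swapN; split_ifs <;> omega
    rw [AE_eq_PE, yg_PE d n hi2 i (i+1), e1, e2]
  have m3 : yg GG uG vG d n i * PE d n i (i+2) = AE d n (i+1) * yg GG uG vG d n i := by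
    rw [yg_PE d n hi i (i+2), swapN_self, swapN_other (by omega) (by omega),
      AE_eq_PE d n (i+1), hnum]
  have m4 : yg GG uG vG d n (i+1) * PE d n i (i+2)
      = AE d n i * yg GG uG vG d n (i+1) := by
    have e1 : swapN (i+1) (i+1+1) i = i := by unfold swapN; split_ifs <;> omega
    have e2 : swapN (i+1) (i+1+1) (i+2) = i + 1 := by unfold swapN; split_ifs <;> omega
    rw [yg_PE d n hi2 i (i+2), e1, e2, AE_eq_PE d n i]
  have hbr : yg GG uG vG d n i * (yg GG uG vG d n (i+1) * yg GG uG vG d n i)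
      = yg GG uG vG d n (i+1) * (yg GG uG vG d n i * yg GG uG vG d n (i+1)) := by
    rw [← mul_assoc, ← mul_assoc]
    exact yg_braid uG vG d n h
  have hF1 : Commute (AE d n i) (PE d n i (i+2)) := by
    rw [AE_eq_PE]; exact commute_PE_PE d n i (i+1) i (i+2)
  have hF2 : Commute (AE d n (i+1)) (PE d n i (i+2)) := by
    rw [AE_eq_PE, hnum]; exact commute_PE_PE d n (i+1) (i+2) i (i+2)
  have h12 : AE d n i * AE d n (i+1) = AE d n (i+1) * AE d n i := by
    rw [AE_eq_PE d n i, AE_eq_PE d n (i+1)]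
    exact (commute_PE_PE d n i (i+1) (i+1) (i+1+1)).eq
  have hswap : AE d n i * (PE d n i (i+2) * AE d n (i+1))
      = AE d n (i+1) * (PE d n i (i+2) * AE d n i) := by
    rw [← mul_assoc, hF1.eq, mul_assoc, h12, ← mul_assoc, ← hF2.eq, mul_assoc]
  simp only [mul_assoc]
  simp only [tl m1]
  simp only [tl m2]
  simp only [tl m3]
  simp only [tl m4]
  rw [hbr, ← mul_assoc (PE d n i (i+2)) (AE d n (i+1)),
    ← mul_assoc (PE d n i (i+2)) (AE d n i), tl hswap]

lemma a_t {i : ℕ} (hi : i + 1 < n) (j : ℕ) :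
    (AE d n i * yg GG uG vG d n i) * yt GG uG vG d n j
      = yt GG uG vG d n (swapN i (i+1) j) * (AE d n i * yg GG uG vG d n i) := by
  have hc : AE d n i * yt GG uG vG d n (swapN i (i+1) j)
      = yt GG uG vG d n (swapN i (i+1) j) * AE d n i := by
    rw [AE_eq_PE]
    exact ((commute_yt_PE d n (swapN i (i+1) j) i (i+1)).symm).eq
  rw [mul_assoc, yg_yt uG vG d n hi j, ← mul_assoc, hc, mul_assoc]

variable [NeZero d]

def tUnit (j : ℕ) : (Yok GG uG vG d n)ˣ where
  val := yt GG uG vG d n j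
  inv := yt GG uG vG d n j ^ (d - 1)
  val_inv := by
    rw [← pow_succ', Nat.sub_add_cancel (Nat.pos_of_ne_zero (NeZero.ne d)),
      yt_pow_d uG vG d n j]
  inv_val := by
    rw [← pow_succ, Nat.sub_add_cancel (Nat.pos_of_ne_zero (NeZero.ne d)),
      yt_pow_d uG vG d n j]

def sUnit (i : ℕ) (hi : i + 1 < n) : (Yok GG uG vG d n)ˣ where
  val := AE d n i * yg GG uG vG d n i
  inv := CE d n i * DE d n i
  val_inv := (main_inv d n hi).1
  inv_val := (main_inv d n hi).2

def genMap : ℕ ⊕ ℕ → (Yok GG uG vG d n)ˣ :=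
  Sum.elim (fun i => if hi : i + 1 < n then sUnit d n i hi else 1) (fun j => tUnit d n j)

lemma relations_hold : ∀ r ∈ {w | FBRel d n w}, FreeGroup.lift (genMap d n) r = 1 := by
  intro r hr
  cases hr with
  | scomm i j hij hj =>
      have hi : i + 1 < n := by omega
      have hjn : j + 1 < n := hj
      simp only [bs, map_mul, map_inv, FreeGroup.lift_apply_of]
      rw [mul_inv_eq_one]
      refine Units.ext ?_
      rw [Units.val_mul, Units.val_mul]
      simp only [genMap, Sum.elim_inl, dif_pos hi, dif_pos hjn]
      exact a_comm d n hij hj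
  | sbraid i h =>
      have hi : i + 1 < n := by omega
      have hi2 : i + 1 + 1 < n := by omega
      simp only [bs, map_mul, map_inv, FreeGroup.lift_apply_of]
      rw [mul_inv_eq_one]
      refine Units.ext ?_
      rw [Units.val_mul, Units.val_mul, Units.val_mul, Units.val_mul]
      simp only [genMap, Sum.elim_inl, dif_pos hi, dif_pos hi2]
      exact a_braid d n h
  | tcomm i j hi hj =>
      simp only [btf, map_mul, map_inv, FreeGroup.lift_apply_of]
      rw [mul_inv_eq_one]
      refine Units.ext ?_
      rw [Units.val_mul, Units.val_mul]
      simp only [genMap, Sum.elim_inr]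
      exact yt_comm uG vG d n i j
  | strel i j hi hj =>
      simp only [bs, btf, map_mul, map_inv, FreeGroup.lift_apply_of]
      rw [mul_inv_eq_one]
      refine Units.ext ?_
      rw [Units.val_mul, Units.val_mul]
      simp only [genMap, Sum.elim_inl, Sum.elim_inr, dif_pos hi]
      exact a_t d n hi j
  | tord j hj =>
      simp only [btf, map_pow, FreeGroup.lift_apply_of]
      refine Units.ext ?_
      rw [Units.val_pow_eq_pow_val, Units.val_one]
      simp only [genMap, Sum.elim_inr]
      exact yt_pow_d uG vG d n j
  | skill i h =>
      simp only [bs, FreeGroup.lift_apply_of, genMap, Sum.elim_inl, dif_neg h]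
  | tkill j h =>
      simp only [btf, FreeGroup.lift_apply_of, genMap, Sum.elim_inr]
      refine Units.ext ?_
      rw [Units.val_one]
      exact yt_out uG vG d n h

def phi : FB d n →* (Yok GG uG vG d n)ˣ :=
  PresentedGroup.toGroup (relations_hold d n)

def delta : MonoidAlgebra GG (FB d n) →ₐ[GG] Yok GG uG vG d n :=
  MonoidAlgebra.lift GG (Yok GG uG vG d n) (FB d n)
    ((Units.coeHom (Yok GG uG vG d n)).comp (phi d n))

lemma delta_isDeltaY : IsDeltaY GG uG vG gG d n (delta d n) := by
  constructor
  · intro i hi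
    have e1 : delta d n (MonoidAlgebra.of GG (FB d n) (fbs d n i))
        = ((Units.coeHom (Yok GG uG vG d n)).comp (phi d n)) (fbs d n i) :=
      MonoidAlgebra.lift_of _ _
    have e2 : ((Units.coeHom (Yok GG uG vG d n)).comp (phi d n)) (fbs d n i)
        = ((genMap d n (Sum.inl i) : (Yok GG uG vG d n)ˣ) : Yok GG uG vG d n) :=
      congrArg (Units.coeHom (Yok GG uG vG d n)) (PresentedGroup.toGroup.of (relations_hold d n))
    have e3 : ((genMap d n (Sum.inl i) : (Yok GG uG vG d n)ˣ) : Yok GG uG vG d n)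
        = AE d n i * yg GG uG vG d n i := by
      simp only [genMap, Sum.elim_inl, dif_pos hi]
      rfl
    exact (e1.trans e2).trans e3
  · intro j hj
    have e1 : delta d n (MonoidAlgebra.of GG (FB d n) (fbt d n j))
        = ((Units.coeHom (Yok GG uG vG d n)).comp (phi d n)) (fbt d n j) :=
      MonoidAlgebra.lift_of _ _
    have e2 : ((Units.coeHom (Yok GG uG vG d n)).comp (phi d n)) (fbt d n j)
        = ((genMap d n (Sum.inr j) : (Yok GG uG vG d n)ˣ) : Yok GG uG vG d n) :=
      congrArg (Units.coeHom (Yok GG uG vG d n)) (PresentedGroup.toGroup.of (relations_hold d n))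
    exact (e1.trans e2)

end GGPart
end S16

end S16Aux
/-- Lemma 6.2 of the paper: the assignment
`σ_i ↦ (γ + (1-γ)e_i) g_i`, `t_j ↦ t_j` extends to an algebra homomorphism
`δ^γ : R'[ℤ/dℤ ≀ B_n] → R' Y_{d,n}`; in particular each `(γ + (1-γ)e_i) g_i` is
invertible with inverse `(γ^{-1} + (1-γ^{-1})e_i) g_i^{-1}`
(where `g_i^{-1} = u^{-2} g_i - u^{-2} v e_i`). -/
theorem statement16 (d n : ℕ) [NeZero d] :
    (∀ i, i + 1 < n →
      ((algebraMap GG (Yok GG uG vG d n) gG +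
          algebraMap GG (Yok GG uG vG d n) (1 - gG) * ye GG uG vG d n i) *
            yg GG uG vG d n i) *
        ((algebraMap GG (Yok GG uG vG d n) gGi +
          algebraMap GG (Yok GG uG vG d n) (1 - gGi) * ye GG uG vG d n i) *
            (algebraMap GG (Yok GG uG vG d n) (uGi ^ 2) * yg GG uG vG d n i -
              algebraMap GG (Yok GG uG vG d n) (uGi ^ 2 * vG) * ye GG uG vG d n i)) = 1 ∧
      ((algebraMap GG (Yok GG uG vG d n) gGi +
          algebraMap GG (Yok GG uG vG d n) (1 - gGi) * ye GG uG vG d n i) *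
            (algebraMap GG (Yok GG uG vG d n) (uGi ^ 2) * yg GG uG vG d n i -
              algebraMap GG (Yok GG uG vG d n) (uGi ^ 2 * vG) * ye GG uG vG d n i)) *
        ((algebraMap GG (Yok GG uG vG d n) gG +
          algebraMap GG (Yok GG uG vG d n) (1 - gG) * ye GG uG vG d n i) *
            yg GG uG vG d n i) = 1) ∧
    ∃ δ : MonoidAlgebra GG (FB d n) →ₐ[GG] Yok GG uG vG d n,
      IsDeltaY GG uG vG gG d n δ := by
  constructor
  · intro i hi
    exact S16.main_inv d n hi
  · exact ⟨S16.delta d n, S16.delta_isDeltaY d n⟩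
end YH
end
end
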